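/- Let (X, d) be a metric space, let K ⊆ X be compact, and let C, D be closed subsets of X with C ∪ D = K. Then for every ε > 0 there exists δ > 0 such that the intersection of the closed δ-neighbourhoods of C and of D (within X) is contained in the closed ε-neighbourhood of C ∩ D. -/

import Mathlib

open Metric Topology Filter

/-- For a compact set `K` covered by two closed sets `C, D`, the intersection of the closed
`δ`-neighbourhoods of `C` and `D` is eventually contained in the closed `ε`-neighbourhood
of `C ∩ D`. -/
theorem stmt0 {X : Type*} [MetricSpace X] (K C D : Set X)
    (hK : IsCompact K) (hC : IsClosed C) (hD : IsClosed D) (hCD : C ∪ D = K) :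
    ∀ ε > 0, ∃ δ > 0,
      {x : X | infDist x C ≤ δ} ∩ {x : X | infDist x D ≤ δ}
        ⊆ {x : X | infDist x (C ∩ D) ≤ ε} := by
  intro ε hε
  rcases (C ∩ D).eq_empty_or_nonempty with hE | ⟨z, hzC, hzD⟩
  · exact ⟨1, one_pos, fun x _ => by
      simp [Set.mem_setOf_eq, hE, Metric.infDist_empty, hε.le]⟩
  · by_contra hcon
    push_neg at hcon
    have hx : ∀ n : ℕ, ∃ x : X, infDist x C ≤ 1/(n+1) ∧ infDist x D ≤ 1/(n+1) ∧
        ε < infDist x (C ∩ D) := by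
      intro n
      obtain ⟨x, hx1, hx2⟩ := Set.not_subset.1 (hcon (1/(n+1)) (by positivity))
      exact ⟨x, hx1.1, hx1.2, lt_of_not_ge hx2⟩
    choose x hxC hxD hxE using hx
    have hCne : C.Nonempty := ⟨z, hzC⟩
    have hc : ∀ n : ℕ, ∃ c ∈ C, dist (x n) c < 2/(n+1) := by
      intro n
      have hpos : (0:ℝ) < n+1 := by positivity
      have h1 : (1:ℝ)/(n+1) < 2/(n+1) := by
        rw [div_lt_div_iff₀ hpos hpos]; linarith
      exact (Metric.infDist_lt_iff hCne).1 (lt_of_le_of_lt (hxC n) h1)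
    choose c hcC hcd using hc
    have hcK : ∀ n, c n ∈ K := fun n => hCD ▸ Or.inl (hcC n)
    obtain ⟨a, haK, φ, hφ, hca⟩ := hK.tendsto_subseq hcK
    have hφtop : Filter.Tendsto φ Filter.atTop Filter.atTop := hφ.tendsto_atTop
    have h1n : Filter.Tendsto (fun n : ℕ => (1:ℝ)/(n+1)) Filter.atTop (𝓝 0) :=
      tendsto_one_div_add_atTop_nhds_zero_nat
    have h1φ : Filter.Tendsto (fun k : ℕ => (1:ℝ)/(φ k + 1)) Filter.atTop (𝓝 0) :=
      h1n.comp hφtop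
    have h2φ : Filter.Tendsto (fun k : ℕ => (2:ℝ)/(φ k + 1)) Filter.atTop (𝓝 0) := by
      have := h1φ.const_mul 2
      simpa [mul_div_assoc, mul_one_div, div_eq_mul_inv] using this
    -- x ∘ φ tends to a
    have hxa : Filter.Tendsto (fun k => x (φ k)) Filter.atTop (𝓝 a) := by
      rw [tendsto_iff_dist_tendsto_zero]
      have hb : ∀ k, dist (x (φ k)) a ≤ 2/(φ k + 1) + dist (c (φ k)) a := fun k =>
        (dist_triangle _ (c (φ k)) a).trans (by
          have := (hcd (φ k)).le; linarith)
      have hlim : Filter.Tendsto (fun k => 2/(φ k + 1) + dist (c (φ k)) a)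
          Filter.atTop (𝓝 0) := by
        have hd : Filter.Tendsto (fun k => dist (c (φ k)) a) Filter.atTop (𝓝 0) :=
          tendsto_iff_dist_tendsto_zero.1 hca
        simpa using h2φ.add hd
      exact squeeze_zero (fun k => dist_nonneg) hb hlim
    -- a ∈ C
    have haC : a ∈ C := hC.mem_of_tendsto hca (Filter.Eventually.of_forall fun k => hcC (φ k))
    -- a ∈ D
    have haD : a ∈ D := by
      have hcont : Filter.Tendsto (fun k => infDist (x (φ k)) D) Filter.atTop
          (𝓝 (infDist a D)) := ((continuous_infDist_pt D).tendsto a).comp hxa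
      have hle : infDist a D ≤ 0 :=
        le_of_tendsto_of_tendsto' hcont h1φ fun k => hxD (φ k)
      have : infDist a D = 0 := le_antisymm hle infDist_nonneg
      exact (hD.mem_iff_infDist_zero ⟨z, hzD⟩).2 this
    -- contradiction
    have hcont2 : Filter.Tendsto (fun k => infDist (x (φ k)) (C ∩ D)) Filter.atTop
        (𝓝 (infDist a (C ∩ D))) := ((continuous_infDist_pt (C ∩ D)).tendsto a).comp hxa
    have hge : ε ≤ infDist a (C ∩ D) :=
      ge_of_tendsto hcont2 (Filter.Eventually.of_forall fun k => (hxE (φ k)).le)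
    have : infDist a (C ∩ D) = 0 := infDist_zero_of_mem ⟨haC, haD⟩
    linarith
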